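/- Let G be a DAG with distinct vertices x and y, let τ be a topological ordering of G in which x precedes y, and let L_Y be the set of vertices that succeed y in τ. If A is a valid adjustment set for x and y in G, then A \ L_Y is also a valid adjustment set for x and y in G. -/

import Mathlib

/-- Adjacency in the skeleton of a digraph given by edge relation `G`. -/
def skelAdj {V : Type*} (G : V → V → Prop) (a b : V) : Prop := G a b ∨ G b a

/-- A digraph is acyclic (a DAG) if it has no directed cycle. -/
def IsAcyclicDigraph {V : Type*} (G : V → V → Prop) : Prop :=
  ∀ v, ¬ Relation.TransGen G v v

/-- A path: a list of distinct vertices in which consecutive vertices are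
joined by an edge (of either orientation). -/
def IsPath {V : Type*} (G : V → V → Prop) (p : List V) : Prop :=
  p.Nodup ∧ p.Chain' (skelAdj G)

/-- A path between `x` and `y` (written from `x` to `y`). -/
def IsPathBetween {V : Type*} (G : V → V → Prop) (x y : V) (p : List V) : Prop :=
  IsPath G p ∧ p.head? = some x ∧ p.getLast? = some y

/-- A directed (causal) path from `x` to `y`: every edge points towards `y`. -/
def IsDirPath {V : Type*} (G : V → V → Prop) (x y : V) (p : List V) : Prop :=
  p.Nodup ∧ p.Chain' G ∧ p.head? = some x ∧ p.getLast? = some y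

/-- `w` is a collider on the path `p`: both edges of `p` at `w` point into `w`. -/
def IsCollider {V : Type*} (G : V → V → Prop) (p : List V) (w : V) : Prop :=
  ∃ a b, [a, w, b] <:+: p ∧ G a w ∧ G b w

/-- Descendants of a vertex (including the vertex itself). -/
def descendants {V : Type*} (G : V → V → Prop) (v : V) : Set V :=
  {w | Relation.ReflTransGen G v w}

/-- Ancestors of a vertex (including the vertex itself). -/
def ancestors {V : Type*} (G : V → V → Prop) (v : V) : Set V :=
  {w | Relation.ReflTransGen G w v}

/-- Parents of a vertex. -/
def parents {V : Type*} (G : V → V → Prop) (v : V) : Set V := {w | G w v}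

/-- Descendants of a set of vertices. -/
def descendantsSet {V : Type*} (G : V → V → Prop) (W : Set V) : Set V :=
  ⋃ v ∈ W, descendants G v

/-- Ancestors of a set of vertices. -/
def ancestorsSet {V : Type*} (G : V → V → Prop) (W : Set V) : Set V :=
  ⋃ v ∈ W, ancestors G v

/-- Parents of a set of vertices. -/
def parentsSet {V : Type*} (G : V → V → Prop) (W : Set V) : Set V :=
  ⋃ v ∈ W, parents G v

/-- A path `p` is blocked by a vertex set `A`: it contains a non-collider in `A`,
or a collider `c` with `descendants G c ∩ A = ∅`. -/
def Blocked {V : Type*} (G : V → V → Prop) (A : Set V) (p : List V) : Prop :=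
  (∃ w ∈ p, ¬ IsCollider G p w ∧ w ∈ A) ∨
    (∃ c, IsCollider G p c ∧ descendants G c ∩ A = ∅)

/-- `cn G x y`: vertices `z ≠ x` lying on some directed path from `x` to `y`. -/
def cn {V : Type*} (G : V → V → Prop) (x y : V) : Set V :=
  {z | z ≠ x ∧ ∃ p, IsDirPath G x y p ∧ z ∈ p}

/-- The forbidden set `forb G x y = de(cn(G,x,y)) ∪ {x}`. -/
def forb {V : Type*} (G : V → V → Prop) (x y : V) : Set V :=
  descendantsSet G (cn G x y) ∪ {x}

/-- `A ⊆ V \ {x,y}` is a valid adjustment set in `G`: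
(i) `A ∩ forb(G,x,y) = ∅`, and (ii) every non-causal path from `x` to `y` is
blocked by `A`. -/
def IsValidAdjustment {V : Type*} (G : V → V → Prop) (x y : V) (A : Set V) : Prop :=
  x ∉ A ∧ y ∉ A ∧ A ∩ forb G x y = ∅ ∧
    ∀ p, IsPathBetween G x y p → ¬ p.Chain' G → Blocked G A p

/-- `rch G x y`: vertices lying on some path between `x` and `y` in the skeleton. -/
def rch {V : Type*} (G : V → V → Prop) (x y : V) : Set V :=
  {z | ∃ p, IsPathBetween G x y p ∧ z ∈ p}

/-- Induced subgraph of `G` on a vertex set `S`. -/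
def induce {V : Type*} (G : V → V → Prop) (S : Set V) : V → V → Prop :=
  fun a b => G a b ∧ a ∈ S ∧ b ∈ S

/-- `clr G x y`: all colliders on any path from `x` to `y` in the induced
subgraph of `G` on `rch G x y`. -/
def clr {V : Type*} (G : V → V → Prop) (x y : V) : Set V :=
  {c | ∃ p, IsPathBetween (induce G (rch G x y)) x y p ∧
      IsCollider (induce G (rch G x y)) p c}

/-- The optimal adjustment set `opadj G x y = pa(cn(G,x,y)) \ forb(G,x,y)`. -/
def opadj {V : Type*} (G : V → V → Prop) (x y : V) : Set V :=
  parentsSet G (cn G x y) \ forb G x y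

/-- `G^{pd}_{xy}`: `G` with every edge from `x` to a child of `x` that is an
ancestor of `y` removed. -/
def pdGraph {V : Type*} (G : V → V → Prop) (x y : V) : V → V → Prop :=
  fun a b => G a b ∧ ¬ (a = x ∧ b ∈ ancestors G y)

/-- `τ` is a topological ordering of `G`. -/
def IsTopOrder {V : Type*} (G : V → V → Prop) (τ : V → ℕ) : Prop :=
  Function.Injective τ ∧ ∀ a b, G a b → τ a < τ b

/-- `G'` is obtained from `G` by altering the position of the single node `z`
in a topological ordering of `G` (keeping the skeleton and the orientation of
all edges not incident to `z`, and reorienting edges incident to `z` according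
to the new ordering), with `x` preceding `y` in both orderings. -/
def AlterOne {V : Type*} (G G' : V → V → Prop) (z x y : V) : Prop :=
  ∃ τ τ' : V → ℕ,
    IsTopOrder G τ ∧ IsTopOrder G' τ' ∧
    τ x < τ y ∧ τ' x < τ' y ∧
    (∀ a b, a ≠ z → b ≠ z → (τ a < τ b ↔ τ' a < τ' b)) ∧
    (∀ a b, a ≠ z → b ≠ z → (G a b ↔ G' a b)) ∧
    (∀ a b, a = z ∨ b = z → (G' a b ↔ (skelAdj G a b ∧ τ' a < τ' b)))

private lemma tau_le_of_rtg {V : Type*} {G : V → V → Prop} {τ : V → ℕ}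
    (hmono : ∀ a b, G a b → τ a < τ b) {c d : V}
    (h : Relation.ReflTransGen G c d) : τ c ≤ τ d := by
  induction h with
  | refl => exact le_rfl
  | tail _ hbd ih => exact le_trans ih (le_of_lt (hmono _ _ hbd))

/-- Proposition: preceding topological order. -/
theorem statement9 {V : Type*} (G : V → V → Prop) (hG : IsAcyclicDigraph G)
    (x y : V) (hxy : x ≠ y)
    (τ : V → ℕ) (hτ : IsTopOrder G τ) (hpre : τ x < τ y)
    (A : Set V) (hA : IsValidAdjustment G x y A) :
    IsValidAdjustment G x y (A \ {v | τ y < τ v}) := by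
  obtain ⟨hx, hy, hforb, hblock⟩ := hA
  obtain ⟨hinj, hmono⟩ := hτ
  refine ⟨fun h => hx h.1, fun h => hy h.1, ?_, ?_⟩
  · apply Set.eq_empty_of_subset_empty
    rw [← hforb]
    exact fun v hv => ⟨hv.1.1, hv.2⟩
  · intro p hp hnc
    by_cases hall : ∃ v ∈ p, τ y < τ v
    · obtain ⟨v, hvp, hvy⟩ := hall
      obtain ⟨c, hc⟩ : ∃ c, c ∈ p.argmax τ := by
        cases h : p.argmax τ with
        | none =>
          rw [List.argmax_eq_none] at h
          subst h
          exact absurd hvp List.not_mem_nil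
        | some c => exact ⟨c, by simp [Option.mem_def, h]⟩
      have hcp : c ∈ p := List.argmax_mem hc
      have hmax : ∀ a ∈ p, τ a ≤ τ c := fun a ha => List.le_of_mem_argmax ha hc
      have hcy : τ y < τ c := lt_of_lt_of_le hvy (hmax v hvp)
      have hcx' : τ x < τ c := lt_trans hpre hcy
      have hcx : c ≠ x := fun h => by subst h; exact lt_irrefl _ hcx'
      have hcyne : c ≠ y := fun h => by subst h; exact lt_irrefl _ hcy
      obtain ⟨l₁, l₂, rfl⟩ := List.append_of_mem hcp
      -- l₁ nonempty
      have hl₁ : l₁ ≠ [] := by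
        intro h
        subst h
        have := hp.2.1
        simp at this
        exact hcx this
      -- l₂ nonempty
      obtain ⟨b, l₂', rfl⟩ : ∃ b l₂', l₂ = b :: l₂' := by
        cases l₂ with
        | nil =>
          exfalso
          have := hp.2.2
          rw [show l₁ ++ [c] = l₁ ++ [c] from rfl, List.getLast?_concat] at this
          exact hcyne (Option.some_injective _ this)
        | cons b l₂' => exact ⟨b, l₂', rfl⟩
      obtain ⟨l₁', a, rfl⟩ : ∃ l₁' a, l₁ = l₁' ++ [a] := by
        exact ⟨l₁.dropLast, l₁.getLast hl₁, (List.dropLast_append_getLast hl₁).symm⟩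
      have hinfix : [a, c, b] <:+: (l₁' ++ [a]) ++ c :: b :: l₂' := by
        refine ⟨l₁', l₂', ?_⟩
        simp
      have hchain3 : skelAdj G a c ∧ skelAdj G c b := by
        have h3 := hp.1.2.infix hinfix
        simp [List.isChain_cons_cons] at h3
        exact h3
      have hac : G a c := by
        rcases hchain3.1 with h | h
        · exact h
        · exact absurd (hmono _ _ h)
            (not_lt.mpr (hmax a (hinfix.subset (by simp))))
      have hbc : G b c := by
        rcases hchain3.2 with h | h
        · exact absurd (hmono _ _ h)
            (not_lt.mpr (hmax b (hinfix.subset (by simp))))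
        · exact h
      refine Or.inr ⟨c, ⟨a, b, hinfix, hac, hbc⟩, ?_⟩
      rw [Set.eq_empty_iff_forall_notMem]
      rintro d ⟨hd1, _, hd2⟩
      exact hd2 (lt_of_lt_of_le hcy (tau_le_of_rtg hmono hd1))
    · push_neg at hall
      rcases hblock p hp hnc with ⟨w, hwp, hwnc, hwA⟩ | ⟨c, hc1, hc2⟩
      · exact Or.inl ⟨w, hwp, hwnc, hwA, fun h => absurd h (not_lt.mpr (hall w hwp))⟩
      · refine Or.inr ⟨c, hc1, ?_⟩
        rw [Set.eq_empty_iff_forall_notMem] at hc2 ⊢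
        exact fun d hd => hc2 d ⟨hd.1, hd.2.1⟩
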